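/- Let p, C be real numbers with p > 0 and C > 0, let ω₀ > 0 be the unique positive root of ω⁴ + p²ω² − C² = 0, and set τ₂₀ = arccos(ω₀²/C)/ω₀. Then for every real τ with 0 ≤ τ < τ₂₀, the equation λ² + pλ + C e^{−λτ} = 0 has no root λ on the imaginary axis (i.e., no root with Re λ = 0). -/

import Mathlib

/-- Below the first critical delay τ₂₀ = arccos(ω₀²/C)/ω₀ the characteristic
equation λ² + pλ + C e^{−λτ} = 0 has no root on the imaginary axis. -/
theorem stmt_11 (p C ω₀ : ℝ) (hp : 0 < p) (hC : 0 < C) (hω : 0 < ω₀)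
    (hroot : ω₀ ^ 4 + p ^ 2 * ω₀ ^ 2 - C ^ 2 = 0)
    (τ : ℝ) (hτ0 : 0 ≤ τ) (hτ : τ < Real.arccos (ω₀ ^ 2 / C) / ω₀) :
    ∀ z : ℂ, z ^ 2 + (p : ℂ) * z + (C : ℂ) * Complex.exp (-z * (τ : ℂ)) = 0 →
      z.re ≠ 0 := by
  intro z hz hre
  set y := z.im with hy
  have hz' : z = (y : ℂ) * Complex.I := by
    apply Complex.ext <;> simp [hre, hy]
  rw [hz'] at hz
  have hzre := congrArg Complex.re hz
  have hzim := congrArg Complex.im hz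
  simp [Complex.exp_re, Complex.exp_im, pow_two, Complex.mul_re, Complex.mul_im] at hzre hzim
  -- hzre : -y*y + C * cos(y*τ) = 0 (some normal form), hzim : p*y - C*sin(y*τ) = 0
  have h1 : C * Real.cos (y * τ) = y ^ 2 := by linear_combination hzre
  have h2 : C * Real.sin (y * τ) = p * y := by linear_combination -hzim
  have hpyth := Real.sin_sq_add_cos_sq (y * τ)
  have hC2 : y ^ 4 + p ^ 2 * y ^ 2 - C ^ 2 = 0 := by
    linear_combination (-(C * Real.cos (y * τ) + y ^ 2)) * h1 +
      (-(C * Real.sin (y * τ) + p * y)) * h2 + C ^ 2 * hpyth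
  have hy0 : y ≠ 0 := by
    intro h
    rw [h] at h1
    simp at h1
    nlinarith
  have hyω : y ^ 2 = ω₀ ^ 2 := by
    have hfac : (y ^ 2 - ω₀ ^ 2) * (y ^ 2 + ω₀ ^ 2 + p ^ 2) = 0 := by
      linear_combination hC2 - hroot
    have hpos : y ^ 2 + ω₀ ^ 2 + p ^ 2 > 0 := by positivity
    have := mul_eq_zero.mp hfac
    rcases this with h | h
    · linarith
    · linarith
  -- cos(y*τ) = cos(ω₀*τ)
  have hcosval : Real.cos (ω₀ * τ) = ω₀ ^ 2 / C := by
    have habs : y = ω₀ ∨ y = -ω₀ := by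
      rcases mul_self_eq_mul_self_iff.mp (show y * y = ω₀ * ω₀ by linear_combination hyω) with h | h
      · exact Or.inl h
      · exact Or.inr h
    have hc : Real.cos (y * τ) = Real.cos (ω₀ * τ) := by
      rcases habs with h | h
      · rw [h]
      · rw [h]; rw [show -ω₀ * τ = -(ω₀ * τ) by ring, Real.cos_neg]
    rw [← hc]
    field_simp
    linarith [h1, hyω]
  -- ω₀² < C
  have hlt : ω₀ ^ 2 < C := by
    by_contra h
    push_neg at h
    nlinarith [mul_pos (pow_pos hp 2) (pow_pos hω 2), mul_le_mul h h (le_of_lt hC) (by nlinarith : (0:ℝ) ≤ ω₀ ^ 2)]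
  have hx1 : ω₀ ^ 2 / C < 1 := (div_lt_one hC).mpr hlt
  have hx0 : 0 < ω₀ ^ 2 / C := by positivity
  have hωτ : ω₀ * τ < Real.arccos (ω₀ ^ 2 / C) := by
    rw [lt_div_iff₀ hω] at hτ
    linarith [hτ]
  have harccos_le : Real.arccos (ω₀ ^ 2 / C) ≤ Real.pi := Real.arccos_le_pi _
  have hmem1 : ω₀ * τ ∈ Set.Icc 0 Real.pi :=
    ⟨mul_nonneg hω.le hτ0, le_trans hωτ.le harccos_le⟩
  have hmem2 : Real.arccos (ω₀ ^ 2 / C) ∈ Set.Icc 0 Real.pi :=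
    ⟨Real.arccos_nonneg _, harccos_le⟩
  have hstrict := Real.strictAntiOn_cos hmem1 hmem2 hωτ
  rw [Real.cos_arccos (by linarith) hx1.le] at hstrict
  rw [hcosval] at hstrict
  exact lt_irrefl _ hstrict
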